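/- Let N ≥ 1 and let α₁ > α₂ > … > α_{N+1} be real numbers. Then the N×N real matrix A with entries A_{k,i} = α_i^k − α_{i+1}^k (for 1 ≤ k, i ≤ N) is invertible. -/
import Mathlib

/-- For N ≥ 1 and reals α₁ > α₂ > … > α_{N+1}, the N×N matrix with
entries A_{k,i} = α_i^k − α_{i+1}^k (1 ≤ k, i ≤ N) is invertible. -/
theorem stmt_1 (N : ℕ) (hN : 1 ≤ N) (α : Fin (N + 1) → ℝ) (hα : StrictAnti α) :
    IsUnit (Matrix.of fun k i : Fin N =>
      α i.castSucc ^ ((k : ℕ) + 1) - α i.succ ^ ((k : ℕ) + 1)) := by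
  set A : Matrix (Fin N) (Fin N) ℝ := Matrix.of fun k i : Fin N =>
      α i.castSucc ^ ((k : ℕ) + 1) - α i.succ ^ ((k : ℕ) + 1) with hA
  -- the transposed Vandermonde matrix
  set V : Matrix (Fin (N + 1)) (Fin (N + 1)) ℝ :=
      (Matrix.vandermonde α).transpose with hV
  -- lower-bidiagonal column-operation matrix
  set C : Matrix (Fin (N + 1)) (Fin (N + 1)) ℝ := Matrix.of fun j i =>
      if j = i then 1 else if (j : ℕ) = (i : ℕ) + 1 ∧ (i : ℕ) < N then -1 else 0 with hC
  -- B = V * C : columns are differences of consecutive columns of V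
  set B : Matrix (Fin (N + 1)) (Fin (N + 1)) ℝ := Matrix.of fun k i =>
      if h : (i : ℕ) < N then α i ^ (k : ℕ) - α ⟨(i : ℕ) + 1, by omega⟩ ^ (k : ℕ)
      else α i ^ (k : ℕ) with hB
  have hVC : V * C = B := by
    ext k i
    simp only [Matrix.mul_apply, hV, hC, hB, Matrix.of_apply, Matrix.transpose_apply,
      Matrix.vandermonde]
    by_cases h : (i : ℕ) < N
    · rw [Finset.sum_eq_add_of_mem i ⟨(i : ℕ) + 1, by omega⟩ (Finset.mem_univ _)
        (Finset.mem_univ _) (by simp [Fin.ext_iff]) ?_]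
      · have hne : ¬ ((⟨(i : ℕ) + 1, by omega⟩ : Fin (N + 1)) = i) := by
          simp [Fin.ext_iff]
        simp [h, hne]
        ring
      · intro c _ hc
        have h1 : ¬ (c = i) := hc.1
        have h2 : ¬ ((c : ℕ) = (i : ℕ) + 1 ∧ (i : ℕ) < N) := by
          rintro ⟨h3, -⟩
          exact hc.2 (by simp [Fin.ext_iff, h3])
        simp [h1, h2]
    · rw [Finset.sum_eq_single i]
      · simp [h]
      · intro c _ hc
        simp [hc, h]
      · simp
  have hCdet : C.det = 1 := by
    have htri : C.BlockTriangular OrderDual.toDual := by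
      intro j i hji
      have : (j : ℕ) < (i : ℕ) := hji
      have h1 : ¬ (j = i) := by simp [Fin.ext_iff]; omega
      have h2 : ¬ ((j : ℕ) = (i : ℕ) + 1 ∧ (i : ℕ) < N) := by omega
      simp [hC, h1, h2]
    rw [Matrix.det_of_lowerTriangular C htri]
    simp [hC]
  have hVdet : V.det ≠ 0 := by
    rw [hV, Matrix.det_transpose, Matrix.det_vandermonde_ne_zero_iff]
    exact hα.injective
  have hBdet : B.det = V.det := by
    rw [← hVC, Matrix.det_mul, hCdet, mul_one]
  -- expand det B along the first row
  have hexp : B.det = (-1 : ℝ) ^ N * A.det := by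
    rw [Matrix.det_succ_row_zero]
    rw [Finset.sum_eq_single (Fin.last N)]
    · have hB0 : B 0 (Fin.last N) = 1 := by
        simp [hB, Fin.last]
      rw [hB0]
      have hsub : B.submatrix Fin.succ (Fin.last N).succAbove = A := by
        ext k i
        have : (Fin.last N).succAbove i = i.castSucc := congrFun Fin.succAbove_last i
        simp only [Matrix.submatrix_apply, this, hB, hA, Matrix.of_apply]
        have hi : ((i.castSucc : Fin (N + 1)) : ℕ) < N := by
          simp [Fin.castSucc, Fin.is_lt]
        rw [dif_pos hi]
        have : (⟨((i.castSucc : Fin (N+1)) : ℕ) + 1, by omega⟩ : Fin (N + 1)) = i.succ := by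
          simp [Fin.ext_iff]
        rw [this]
        simp [Fin.val_succ]
      rw [hsub]
      simp [Fin.val_last]
    · intro j _ hj
      have hjN : (j : ℕ) < N := by
        have := j.is_lt
        have : (j : ℕ) ≠ N := fun h => hj (by simp [Fin.ext_iff, h, Fin.last])
        omega
      have hB0 : B 0 j = 0 := by
        simp [hB, hjN]
      simp [hB0]
    · simp
  have hAdet : A.det ≠ 0 := by
    intro h
    rw [hBdet] at hexp
    rw [h, mul_zero] at hexp
    exact hVdet hexp
  rw [Matrix.isUnit_iff_isUnit_det]
  exact isUnit_iff_ne_zero.mpr hAdet
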